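/- For every odd integer n ≥ 5, the optimal value of the Lovász theta SDP of the complement C̄_n of the n-cycle equals (1 + cos(π/n))/cos(π/n); that is, (1 + cos(π/n))/cos(π/n) is the greatest element of the set of objective values ∑_{i=1}^n X_{ii} taken over all primal feasible matrices X. -/

import Mathlib

/-- Adjacency in the complement `C̄_n` of the `n`-cycle on the vertices `1, …, n`:
`i` and `j` are adjacent iff `i ≠ j` and `i - j ≢ ±1 (mod n)`.  Here `i % n + 1` is the
cyclic successor of a vertex `i ∈ {1, …, n}`. -/
def antiCycleAdj (n i j : ℕ) : Prop :=
  i ≠ j ∧ ¬(i % n + 1 = j ∨ j % n + 1 = i)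

/-- A real symmetric `(1+n) × (1+n)` matrix `X` (rows/columns indexed `0, 1, …, n`) is primal
feasible for the Lovász theta SDP of the graph on vertices `{1, …, n}` with adjacency `adj` if
`X` is positive semidefinite, `X 0 0 = 1`, `X i i = X 0 i` for `i ∈ {1, …, n}`, and `X i j = 0`
whenever `i` and `j` are adjacent. -/
def thetaPrimalFeasible (n : ℕ) (adj : ℕ → ℕ → Prop)
    (X : Matrix (Fin (n + 1)) (Fin (n + 1)) ℝ) : Prop :=
  X.PosSemidef ∧ X 0 0 = 1 ∧
    (∀ i : Fin (n + 1), i.val ≠ 0 → X i i = X 0 i) ∧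
    (∀ i j : Fin (n + 1), i.val ≠ 0 → j.val ≠ 0 → adj i.val j.val → X i j = 0)

open Real Complex Finset

lemma sum_exp_nat (n : ℕ) (hn : 0 < n) (m : ℕ) :
    ∑ k ∈ range n, Complex.exp (2 * π * Complex.I * (k * m) / n)
      = if n ∣ m then (n : ℂ) else 0 := by
  have hn' : (n : ℂ) ≠ 0 := Nat.cast_ne_zero.mpr hn.ne'
  have h2pi : (2 * (π:ℂ) * Complex.I) ≠ 0 := by
    simp [Complex.ofReal_ne_zero.mpr Real.pi_ne_zero, Complex.I_ne_zero]
  have key : ∀ k : ℕ, Complex.exp (2 * π * Complex.I * (k * m) / n)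
      = (Complex.exp (2 * π * Complex.I * m / n)) ^ k := by
    intro k
    rw [← Complex.exp_nat_mul]
    congr 1
    field_simp
  simp only [key]
  by_cases h : n ∣ m
  · have h1 : Complex.exp (2 * π * Complex.I * m / n) = 1 := by
      obtain ⟨c, rfl⟩ := h
      have h2 : (2 * π * Complex.I * ((n : ℕ) * (c : ℕ) : ℕ) / n : ℂ) = (c : ℤ) * (2 * π * Complex.I) := by
        push_cast
        field_simp
      rw [h2, Complex.exp_int_mul_two_pi_mul_I]
    rw [h1]
    simp [h]
  · have hz : Complex.exp (2 * π * Complex.I * m / n) ≠ 1 := by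
      intro hc1
      rw [Complex.exp_eq_one_iff] at hc1
      obtain ⟨c, hc⟩ := hc1
      apply h
      have hm : (m : ℂ) = (c : ℂ) * n := by
        apply mul_left_cancel₀ h2pi
        have hc' : 2 * (π:ℂ) * Complex.I * m / n = c * (2 * π * Complex.I) := hc
        field_simp at hc'
        linear_combination (2 * (π:ℂ) * Complex.I) * hc'
      have hm' : (m : ℤ) = c * n := by exact_mod_cast hm
      have hd : (n : ℤ) ∣ (m : ℤ) := ⟨c, by linarith⟩
      exact_mod_cast hd
    rw [geom_sum_eq hz, if_neg h]
    have hpow : Complex.exp (2 * π * Complex.I * m / n) ^ n = 1 := by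
      rw [← Complex.exp_nat_mul]
      have h2 : (n : ℂ) * (2 * π * Complex.I * m / n) = (m : ℤ) * (2 * π * Complex.I) := by
        push_cast; field_simp
      rw [h2, Complex.exp_int_mul_two_pi_mul_I]
    rw [hpow]
    simp

lemma sum_cos_nat (n : ℕ) (hn : 0 < n) (m : ℕ) :
    ∑ k ∈ range n, Real.cos (2 * π * (k * m) / n) = if n ∣ m then (n : ℝ) else 0 := by
  have h := congrArg Complex.re (sum_exp_nat n hn m)
  rw [Complex.re_sum] at h
  have hterm : ∀ k : ℕ, (Complex.exp (2 * π * Complex.I * (k * m) / n)).re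
      = Real.cos (2 * π * (k * m) / n) := by
    intro k
    rw [show (2 * (π:ℂ) * Complex.I * (k * m) / n) = ((2*π*(k*m)/n : ℝ) : ℂ) * Complex.I by
      push_cast; ring]
    exact Complex.exp_ofReal_mul_I_re _
  simp only [hterm] at h
  rw [h]
  split <;> simp

lemma sum_cos_mul (n : ℕ) (hn : 0 < n) (m : ℕ) (hm : 1 ≤ m) :
    ∑ k ∈ range n, Real.cos (2 * π * (k * 1) / n) * Real.cos (2 * π * (k * m) / n)
      = ((if n ∣ (m+1) then (n:ℝ) else 0) + (if n ∣ (m-1) then (n:ℝ) else 0)) / 2 := by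
  have hterm : ∀ k : ℕ, Real.cos (2 * π * (k * 1) / n) * Real.cos (2 * π * (k * m) / n)
      = (Real.cos (2 * π * (k * ((m+1:ℕ):ℝ)) / n) + Real.cos (2 * π * (k * ((m-1:ℕ):ℝ)) / n)) / 2 := by
    intro k
    have e1 : 2 * π * (k * (m+1)) / n = 2 * π * (k*1) / n + 2 * π * (k * m) / n := by
      push_cast; field_simp; ring
    have e2 : 2 * π * ((k : ℝ) * ((m:ℝ) - 1)) / n = 2 * π * (k * m) / n - 2 * π * (k*1) / n := by
      push_cast; field_simp
    have e3 : ((m - 1 : ℕ) : ℝ) = (m : ℝ) - 1 := by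
      have : 1 ≤ m := hm
      push_cast [this]; ring
    rw [show 2 * π * ((k:ℝ) * ((m+1 : ℕ):ℝ)) / n = 2 * π * (k*1) / n + 2 * π * (k * m) / n by
      push_cast; field_simp; ring]
    rw [show 2 * π * ((k:ℝ) * ((m-1 : ℕ):ℝ)) / n = 2 * π * (k * m) / n - 2 * π * (k*1) / n by
      rw [e3]; push_cast; field_simp]
    rw [Real.cos_add, Real.cos_sub]
    ring
  simp only [hterm]
  rw [← Finset.sum_div, Finset.sum_add_distrib, sum_cos_nat n hn (m+1), sum_cos_nat n hn (m-1)]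

lemma cos_pi_div_pos (n : ℕ) (hn : 5 ≤ n) : 0 < Real.cos (π / n) := by
  apply Real.cos_pos_of_mem_Ioo
  constructor
  · have : (0:ℝ) < π / n := by positivity
    linarith [Real.pi_pos]
  · have h1 : (π : ℝ) / n ≤ π / 5 := by
      apply div_le_div_of_nonneg_left Real.pi_pos.le (by norm_num)
      exact_mod_cast hn
    have : (π:ℝ)/5 < π/2 := by
      apply div_lt_div_of_pos_left Real.pi_pos <;> norm_num
    linarith

lemma nu_key (n : ℕ) (hodd : Odd n) (hn : 5 ≤ n) (k : ℕ) (hk : k < n) :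
    0 ≤ Real.cos (π / n) + Real.cos (2 * π * (k*1) / n) := by
  have hn0 : (0:ℝ) < n := by positivity
  have hstep : ∀ j : ℕ, 2 * j + 1 ≤ n → -Real.cos (π/n) ≤ Real.cos (2 * π * j / n) := by
    intro j hj
    have h1 : Real.cos (π - π/n) = -Real.cos (π/n) := Real.cos_pi_sub _
    rw [← h1]
    apply Real.cos_le_cos_of_nonneg_of_le_pi
    · positivity
    · have : (0:ℝ) < π/n := by positivity
      linarith
    · rw [show (π:ℝ) - π/n = π * ((n:ℝ) - 1) / n by field_simp]
      rw [div_le_div_iff₀ hn0 hn0]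
      have : (2 * j : ℝ) ≤ (n:ℝ) - 1 := by
        have : (2*j+1 : ℝ) ≤ n := by exact_mod_cast hj
        linarith
      nlinarith [mul_le_mul_of_nonneg_right this (mul_pos Real.pi_pos hn0).le]
  rcases Nat.lt_or_ge (2*k) n with h | h
  · have h2 : 2*k + 1 ≤ n := by omega
    have := hstep k h2
    rw [show (2:ℝ) * π * ((k:ℝ)*1) / n = 2 * π * k / n by ring]
    linarith
  · -- 2k ≥ n; since n odd, 2k ≠ n, so 2k ≥ n+1, and 2(n−k) + 1 ≤ n
    have hne : 2*k ≠ n := by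
      intro hc; exact (Nat.not_even_iff_odd.mpr hodd) ⟨k, by omega⟩
    have h2 : 2*(n-k) + 1 ≤ n := by omega
    have := hstep (n-k) h2
    have heq : Real.cos (2 * π * ((n:ℝ)-(k:ℝ)) / n) = Real.cos (2 * π * (k*1) / n) := by
      rw [show 2 * π * ((n:ℝ)-(k:ℝ)) / n = 2*π - 2 * π * ((k:ℝ)*1) / n by field_simp]
      exact Real.cos_two_pi_sub _
    rw [show ((n - k : ℕ):ℝ) = (n:ℝ) - k by push_cast [Nat.le_of_lt hk]; ring] at this
    linarith [heq ▸ this]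

noncomputable def ltc (n : ℕ) : ℝ := Real.cos (π / n)
noncomputable def ltd (n : ℕ) : ℝ := (1 + ltc n) / (ltc n * n)
noncomputable def lte (n : ℕ) : ℝ := ltd n / (2 * ltc n)
noncomputable def ltnu (n k : ℕ) : ℝ := 2 * lte n * (ltc n + Real.cos (2 * π * (k * 1) / n))

noncomputable def ltA (n : ℕ) : Matrix (Fin n × Bool) (Fin (n+1)) ℝ :=
  fun p j => if (j : ℕ) = 0 then (if p.1.val = 0 ∧ p.2 = false then 1 else 0)
    else Real.sqrt (ltnu n p.1.val / n) *
      (if p.2 then Real.sin (2 * π * (p.1.val * j.val) / n)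
       else Real.cos (2 * π * (p.1.val * j.val) / n))

noncomputable def ltX (n : ℕ) : Matrix (Fin (n+1)) (Fin (n+1)) ℝ := (ltA n).conjTranspose * ltA n

lemma ltd_pos (n : ℕ) (hn : 5 ≤ n) : 0 < ltd n := by
  have hc := cos_pi_div_pos n hn
  have hn0 : (0:ℝ) < n := by positivity
  unfold ltd ltc
  positivity

lemma lte_pos (n : ℕ) (hn : 5 ≤ n) : 0 < lte n := by
  have hc := cos_pi_div_pos n hn
  have hd := ltd_pos n hn
  unfold lte ltc
  positivity

lemma ltd_eq (n : ℕ) (hn : 5 ≤ n) : ltd n = 2 * lte n * ltc n := by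
  have hc := cos_pi_div_pos n hn
  unfold lte ltc at *
  field_simp

lemma ltnu_nonneg (n : ℕ) (hodd : Odd n) (hn : 5 ≤ n) (k : ℕ) (hk : k < n) :
    0 ≤ ltnu n k / n := by
  have h1 := nu_key n hodd hn k hk
  have h2 := (lte_pos n hn).le
  have hn0 : (0:ℝ) ≤ n := by positivity
  unfold ltnu ltc at *
  positivity

lemma ltX_posSemidef (n : ℕ) : (ltX n).PosSemidef :=
  Matrix.posSemidef_conjTranspose_mul_self (ltA n)

lemma sqrt_nu0 (n : ℕ) (hn : 5 ≤ n) : Real.sqrt (ltnu n 0 / n) = ltd n := by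
  have hc := cos_pi_div_pos n hn
  have hd := ltd_pos n hn
  have hn0 : (0:ℝ) < n := by positivity
  have h1 : ltnu n 0 / n = ltd n * ltd n := by
    unfold ltnu lte ltd ltc at *
    norm_num
    field_simp
    ring
  rw [h1, Real.sqrt_mul_self hd.le]

lemma ltX_00 (n : ℕ) (hn : 5 ≤ n) : ltX n 0 0 = 1 := by
  rw [ltX, Matrix.mul_apply]
  simp only [Matrix.conjTranspose_apply, star_trivial]
  rw [Fintype.sum_prod_type]
  simp only [Fintype.sum_bool]
  have hterm : ∀ k : Fin n,
      ltA n (k, true) 0 * ltA n (k, true) 0 + ltA n (k, false) 0 * ltA n (k, false) 0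
      = if k.val = 0 then 1 else 0 := by
    intro k
    by_cases hk : k.val = 0 <;> simp [ltA, hk]
  simp only [hterm]
  rw [Fin.sum_univ_eq_sum_range (fun k => if k = 0 then (1:ℝ) else 0)]
  rw [Finset.sum_ite_eq' (range n) 0 (fun _ => (1:ℝ))]
  simp [Finset.mem_range]
  omega

lemma ltX_0j (n : ℕ) (hn : 5 ≤ n) (j : Fin (n+1)) (hj : j.val ≠ 0) :
    ltX n 0 j = ltd n := by
  rw [ltX, Matrix.mul_apply]
  simp only [Matrix.conjTranspose_apply, star_trivial]
  rw [Fintype.sum_prod_type]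
  simp only [Fintype.sum_bool]
  have hterm : ∀ k : Fin n,
      ltA n (k, true) 0 * ltA n (k, true) j + ltA n (k, false) 0 * ltA n (k, false) j
      = if k.val = 0 then ltd n else 0 := by
    intro k
    by_cases hk : k.val = 0 <;> simp [ltA, hk, hj]
    rw [← sqrt_nu0 n hn]
    norm_num
  simp only [hterm]
  rw [Fin.sum_univ_eq_sum_range (fun k => if k = 0 then ltd n else 0)]
  rw [Finset.sum_ite_eq' (range n) 0 (fun _ => ltd n)]
  simp [Finset.mem_range]
  omega

lemma ltX_ij (n : ℕ) (hodd : Odd n) (hn : 5 ≤ n) (i j : Fin (n+1))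
    (hi : i.val ≠ 0) (hj : j.val ≠ 0) :
    ltX n i j = (if n ∣ (i.val + n - j.val) then ltd n else 0)
      + ((if n ∣ (i.val + n - j.val + 1) then lte n else 0)
       + (if n ∣ (i.val + n - j.val - 1) then lte n else 0)) := by
  have hc := cos_pi_div_pos n hn
  have hn0 : (0:ℝ) < n := by positivity
  have hjle : j.val ≤ n := by omega
  have hile : i.val ≤ n := by omega
  set m : ℕ := i.val + n - j.val with hm
  have hm1 : 1 ≤ m := by omega
  have hmcast : (m : ℝ) = (i.val : ℝ) + n - j.val := by
    rw [hm, Nat.cast_sub (by omega)]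
    push_cast
    ring
  rw [ltX, Matrix.mul_apply]
  simp only [Matrix.conjTranspose_apply, star_trivial]
  rw [Fintype.sum_prod_type]
  simp only [Fintype.sum_bool]
  have hterm : ∀ k : Fin n,
      ltA n (k, true) i * ltA n (k, true) j + ltA n (k, false) i * ltA n (k, false) j
      = ltnu n k.val / n * Real.cos (2 * π * (k.val * m) / n) := by
    intro k
    simp only [ltA, if_neg hi, if_neg hj, if_pos rfl, if_true, Bool.false_eq_true, if_false]
    have hss : √(ltnu n (k:ℕ) / n) * √(ltnu n (k:ℕ) / n) = ltnu n (k:ℕ) / n :=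
      Real.mul_self_sqrt (ltnu_nonneg n hodd hn k.val k.isLt)
    have hcos : Real.cos (2 * π * ((k:ℕ) * m) / n)
        = Real.cos (2 * π * ((k:ℕ) * (i:ℕ)) / n) * Real.cos (2 * π * ((k:ℕ) * (j:ℕ)) / n)
          + Real.sin (2 * π * ((k:ℕ) * (i:ℕ)) / n) * Real.sin (2 * π * ((k:ℕ) * (j:ℕ)) / n) := by
      rw [← Real.cos_sub]
      have harg : (2 : ℝ) * π * ((k:ℕ) * m) / n
          = (2 * π * ((k:ℕ) * (i:ℕ)) / n - 2 * π * ((k:ℕ) * (j:ℕ)) / n)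
            + (((k:ℕ) : ℤ) : ℝ) * (2 * π) := by
        rw [hmcast]
        push_cast
        field_simp
        ring
      rw [harg, Real.cos_add_int_mul_two_pi]
    rw [hcos]
    linear_combination (Real.cos (2 * π * ((k:ℕ) * (i:ℕ)) / n) * Real.cos (2 * π * ((k:ℕ) * (j:ℕ)) / n)
      + Real.sin (2 * π * ((k:ℕ) * (i:ℕ)) / n) * Real.sin (2 * π * ((k:ℕ) * (j:ℕ)) / n)) * hss
  simp only [hterm]
  rw [Fin.sum_univ_eq_sum_range (fun k => ltnu n k / n * Real.cos (2 * π * (k * m) / n))]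
  have hexp : ∀ k ∈ range n, ltnu n k / n * Real.cos (2 * π * (k * m) / n)
      = (2 * lte n * ltc n / n) * Real.cos (2 * π * (k * m) / n)
        + (2 * lte n / n) * (Real.cos (2 * π * (k * 1) / n) * Real.cos (2 * π * (k * m) / n)) := by
    intro k _
    unfold ltnu
    ring
  rw [Finset.sum_congr rfl hexp, Finset.sum_add_distrib, ← Finset.mul_sum, ← Finset.mul_sum]
  rw [sum_cos_nat n (by omega) m, sum_cos_mul n (by omega) m hm1]
  rw [ltd_eq n hn]
  have hne : (n : ℝ) ≠ 0 := ne_of_gt hn0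
  split_ifs <;> field_simp <;> ring

lemma dvd_window (n m : ℕ) (hn : 1 ≤ n) (hm : m ≤ 2*n) :
    n ∣ m ↔ (m = 0 ∨ m = n ∨ m = 2*n) := by
  constructor
  · rintro ⟨c, rfl⟩
    rcases c with _ | _ | _ | c
    · left; simp
    · right; left; simp
    · right; right; ring
    · exfalso
      have h3 : n * 3 ≤ n * (c + 1 + 1 + 1) := Nat.mul_le_mul_left n (by omega)
      omega
  · rintro (rfl | rfl | rfl)
    · exact dvd_zero _
    · exact dvd_refl _
    · exact dvd_mul_left _ 2

lemma ind_diag (n a b : ℕ) (hn : 5 ≤ n) (ha1 : 1 ≤ a) (han : a ≤ n) (hb1 : 1 ≤ b) (hbn : b ≤ n) :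
    (n ∣ (a + n - b) ↔ a = b) := by
  rw [dvd_window n _ (by omega) (by omega)]
  omega

lemma ind_succ (n a b : ℕ) (hn : 5 ≤ n) (ha1 : 1 ≤ a) (han : a ≤ n) (hb1 : 1 ≤ b) (hbn : b ≤ n) :
    (n ∣ (a + n - b + 1) ↔ a % n + 1 = b) := by
  have hmod : a % n = if a = n then 0 else a := by
    split_ifs with h
    · simp [h]
    · exact Nat.mod_eq_of_lt (by omega)
  rw [dvd_window n _ (by omega) (by omega)]
  split_ifs at hmod <;> omega

lemma ind_pred (n a b : ℕ) (hn : 5 ≤ n) (ha1 : 1 ≤ a) (han : a ≤ n) (hb1 : 1 ≤ b) (hbn : b ≤ n) :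
    (n ∣ (a + n - b - 1) ↔ b % n + 1 = a) := by
  have hmod : b % n = if b = n then 0 else b := by
    split_ifs with h
    · simp [h]
    · exact Nat.mod_eq_of_lt (by omega)
  rw [dvd_window n _ (by omega) (by omega)]
  split_ifs at hmod <;> omega

lemma ltX_diag (n : ℕ) (hodd : Odd n) (hn : 5 ≤ n) (i : Fin (n+1)) (hi : i.val ≠ 0) :
    ltX n i i = ltd n := by
  rw [ltX_ij n hodd hn i i hi hi]
  have h1 : i.val ≤ n := by omega
  rw [if_pos ((ind_diag n i.val i.val hn (by omega) h1 (by omega) h1).mpr rfl)]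
  have hmod : i.val % n = if i.val = n then 0 else i.val := by
    split_ifs with h
    · simp [h]
    · exact Nat.mod_eq_of_lt (by omega)
  rw [if_neg (by rw [ind_succ n i.val i.val hn (by omega) h1 (by omega) h1]; split_ifs at hmod <;> omega),
      if_neg (by rw [ind_pred n i.val i.val hn (by omega) h1 (by omega) h1]; split_ifs at hmod <;> omega)]
  ring

lemma ltX_adj_zero (n : ℕ) (hodd : Odd n) (hn : 5 ≤ n) (i j : Fin (n+1))
    (hi : i.val ≠ 0) (hj : j.val ≠ 0) (hadj : antiCycleAdj n i.val j.val) :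
    ltX n i j = 0 := by
  obtain ⟨hne, hnadj⟩ := hadj
  push_neg at hnadj
  have h1 : i.val ≤ n := by omega
  have h2 : j.val ≤ n := by omega
  rw [ltX_ij n hodd hn i j hi hj]
  rw [if_neg (by rw [ind_diag n i.val j.val hn (by omega) h1 (by omega) h2]; exact hne),
      if_neg (by rw [ind_succ n i.val j.val hn (by omega) h1 (by omega) h2]; exact hnadj.1),
      if_neg (by rw [ind_pred n i.val j.val hn (by omega) h1 (by omega) h2]; exact hnadj.2)]
  ring

lemma ltX_objective (n : ℕ) (hodd : Odd n) (hn : 5 ≤ n) :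
    ∑ i : Fin n, ltX n i.succ i.succ = (1 + ltc n) / ltc n := by
  have hc := cos_pi_div_pos n hn
  have hn0 : (0:ℝ) < n := by positivity
  have hd : ∀ i : Fin n, ltX n i.succ i.succ = ltd n := by
    intro i
    exact ltX_diag n hodd hn i.succ (by simp [Fin.val_succ])
  rw [Finset.sum_congr rfl (fun i _ => hd i), Finset.sum_const, Finset.card_univ,
    Fintype.card_fin, nsmul_eq_mul]
  unfold ltd ltc at *
  field_simp

lemma adjCoef (n : ℕ) (hodd : Odd n) (hn : 5 ≤ n) (a b : ℕ) (ha1 : 1 ≤ a) (han : a ≤ n)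
    (hb1 : 1 ≤ b) (hbn : b ≤ n) (hadj : a % n + 1 = b) :
    Real.cos (π * (n-1) * a / n) * Real.cos (π * (n-1) * b / n)
      + Real.sin (π * (n-1) * a / n) * Real.sin (π * (n-1) * b / n) = -ltc n := by
  have hn0 : (0:ℝ) < n := by positivity
  have hne : (n:ℝ) ≠ 0 := ne_of_gt hn0
  rw [← Real.cos_sub]
  rcases eq_or_lt_of_le han with heq | hlt
  · have hb : b = 1 := by
      rw [heq, Nat.mod_self] at hadj
      omega
    obtain ⟨m, hm⟩ := hodd
    have hm2 : 2 ≤ m := by omega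
    have hncast : (n:ℝ) = 2*(m:ℝ)+1 := by rw [hm]; push_cast; ring
    have harg : π * (n-1) * a / n - π * (n-1) * b / n
        = (π + π/n) + (((m:ℤ) - 1) : ℝ) * (2*π) := by
      rw [hb, heq, hncast]
      push_cast
      have h2m : (2*(m:ℝ)+1) ≠ 0 := by positivity
      field_simp
      ring
    rw [show (((m:ℤ) - 1) : ℝ) = (((m - 1 : ℤ)) : ℝ) by push_cast; ring] at harg
    rw [harg, Real.cos_add_int_mul_two_pi, show (π + π/n : ℝ) = π/n + π by ring,
      Real.cos_add_pi]
    rfl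
  · have hb : b = a + 1 := by
      rw [Nat.mod_eq_of_lt hlt] at hadj
      omega
    have harg : π * (n-1) * a / n - π * (n-1) * b / n = -(π - π/n) := by
      rw [hb]
      push_cast
      field_simp
      ring
    rw [harg, Real.cos_neg, Real.cos_pi_sub]
    rfl

noncomputable def vvec (n : ℕ) : Fin (n+1) → ℝ :=
  fun i => if i.val = 0 then -((1 + ltc n) / ltc n) else 1
noncomputable def avec (n : ℕ) : Fin (n+1) → ℝ :=
  fun i => if i.val = 0 then 0 else Real.cos (π * (n-1) * i.val / n)
noncomputable def bvec (n : ℕ) : Fin (n+1) → ℝ :=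
  fun i => if i.val = 0 then 0 else Real.sin (π * (n-1) * i.val / n)

lemma theta_upper (n : ℕ) (hodd : Odd n) (hn : 5 ≤ n)
    (X : Matrix (Fin (n+1)) (Fin (n+1)) ℝ)
    (hpsd : X.PosSemidef) (h00 : X 0 0 = 1)
    (hdiag : ∀ i : Fin (n+1), i.val ≠ 0 → X i i = X 0 i)
    (hzero : ∀ i j : Fin (n+1), i.val ≠ 0 → j.val ≠ 0 → antiCycleAdj n i.val j.val → X i j = 0) :
    ∑ i : Fin n, X i.succ i.succ ≤ (1 + ltc n) / ltc n := by
  have hc : 0 < ltc n := cos_pi_div_pos n hn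
  have hc1 : (0:ℝ) < 1 + ltc n := by linarith
  set c := ltc n with hcdef
  set t : ℝ := (1 + c) / c with htdef
  set α : ℝ := c / (1 + c) with hαdef
  set ρ : ℝ := 1 / (1 + c) with hρdef
  have hα : 0 ≤ α := by positivity
  have hρ : 0 ≤ ρ := by positivity
  -- quadratic forms are nonnegative
  have hQ : ∀ u : Fin (n+1) → ℝ, 0 ≤ ∑ i, ∑ j, u i * X i j * u j := by
    intro u
    have h2 := hpsd.dotProduct_mulVec_nonneg u
    have h3 : dotProduct (star u) (X.mulVec u) = ∑ i, ∑ j, u i * X i j * u j := by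
      simp only [dotProduct, Matrix.mulVec, star_trivial, Pi.star_apply]
      refine Finset.sum_congr rfl fun i _ => ?_
      rw [Finset.mul_sum]
      refine Finset.sum_congr rfl fun j _ => ?_
      ring
    linarith [h3 ▸ h2]
  -- the combined coefficient matrix
  set W : Fin (n+1) → Fin (n+1) → ℝ := fun i j =>
    α * (vvec n i * vvec n j) + ρ * (avec n i * avec n j + bvec n i * bvec n j) with hWdef
  have hcomb : 0 ≤ ∑ i, ∑ j, W i j * X i j := by
    have h1 := hQ (vvec n)
    have h2 := hQ (avec n)
    have h3 := hQ (bvec n)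
    have he : ∑ i, ∑ j, W i j * X i j
        = α * (∑ i, ∑ j, vvec n i * X i j * vvec n j)
          + (ρ * (∑ i, ∑ j, avec n i * X i j * avec n j)
           + ρ * (∑ i, ∑ j, bvec n i * X i j * bvec n j)) := by
      rw [Finset.mul_sum, Finset.mul_sum, Finset.mul_sum, ← Finset.sum_add_distrib,
        ← Finset.sum_add_distrib]
      refine Finset.sum_congr rfl fun i _ => ?_
      rw [Finset.mul_sum, Finset.mul_sum, Finset.mul_sum, ← Finset.sum_add_distrib,
        ← Finset.sum_add_distrib]
      refine Finset.sum_congr rfl fun j _ => ?_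
      simp only [hWdef]
      ring
    rw [he]
    have := mul_nonneg hα h1
    have := mul_nonneg hρ h2
    have := mul_nonneg hρ h3
    linarith
  have h1c : (1 + ltc n) ≠ 0 := by rw [← hcdef]; exact ne_of_gt hc1
  have hcne : ltc n ≠ 0 := by rw [← hcdef]; exact ne_of_gt hc
  have hα1 : α * ((1 + ltc n) / ltc n) = 1 := by
    rw [hαdef, ← hcdef]; field_simp
  have hαρ : α + ρ = 1 := by
    rw [hαdef, hρdef]; field_simp; ring
  have hαρc : α - ρ * ltc n = 0 := by
    rw [hαdef, hρdef, ← hcdef]; field_simp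
    try ring
  have hαt : α * ((1 + ltc n) / ltc n) * ((1 + ltc n) / ltc n) = t := by
    rw [hαdef, htdef, ← hcdef]; field_simp
    try ring
  -- pointwise evaluation
  have hpoint : ∀ i j : Fin (n+1), W i j * X i j =
      (if i.val = 0 then (if j.val = 0 then t else -X i j)
       else if j.val = 0 then -X i j else if i = j then X i j else 0) := by
    intro i j
    by_cases hi : i.val = 0
    · have hi0 : i = 0 := Fin.ext hi
      by_cases hj : j.val = 0
      · have hj0 : j = 0 := Fin.ext hj
        subst hi0; subst hj0
        simp only [hWdef, vvec, avec, bvec, Fin.val_zero, eq_self_iff_true, if_true, h00]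
        linear_combination hαt
      · simp only [hWdef, vvec, avec, bvec, hi, hj, eq_self_iff_true, if_true, if_false]
        linear_combination (-(X i j)) * hα1
    · by_cases hj : j.val = 0
      · simp only [hWdef, vvec, avec, bvec, hi, hj, eq_self_iff_true, if_true, if_false]
        linear_combination (-(X i j)) * hα1
      · by_cases hij : i = j
        · subst hij
          simp only [hWdef, vvec, avec, bvec, hi, eq_self_iff_true, if_true, if_false]
          have htrig : Real.cos (π * (↑n - 1) * ↑↑i / ↑n) * Real.cos (π * (↑n - 1) * ↑↑i / ↑n)
              + Real.sin (π * (↑n - 1) * ↑↑i / ↑n) * Real.sin (π * (↑n - 1) * ↑↑i / ↑n) = 1 := by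
            rw [← Real.cos_sub, sub_self, Real.cos_zero]
          linear_combination (X i i * ρ) * htrig + X i i * hαρ
        · simp only [hWdef, hi, hj, hij, if_false]
          have hi1 : 1 ≤ i.val := by omega
          have hin : i.val ≤ n := by omega
          have hj1 : 1 ≤ j.val := by omega
          have hjn : j.val ≤ n := by omega
          by_cases hadj : i.val % n + 1 = j.val ∨ j.val % n + 1 = i.val
          · have htrig : avec n i * avec n j + bvec n i * bvec n j = -ltc n := by
              simp only [avec, bvec, hi, hj, if_false]
              rcases hadj with h | h
              · exact adjCoef n hodd hn i.val j.val hi1 hin hj1 hjn h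
              · have := adjCoef n hodd hn j.val i.val hj1 hjn hi1 hin h
                linarith [this]
            have hvv : vvec n i * vvec n j = 1 := by
              simp [vvec, hi, hj]
            linear_combination (X i j * ρ) * htrig + (X i j * α) * hvv + X i j * hαρc
          · have hX0 : X i j = 0 := by
              apply hzero i j hi hj
              refine ⟨fun hc' => hij (Fin.ext hc'), hadj⟩
            rw [hX0]
            ring
  -- symmetry facts
  have hXd : ∀ j : Fin n, X 0 j.succ = X j.succ j.succ :=
    fun j => (hdiag j.succ (by simp [Fin.val_succ])).symm
  have hXh : ∀ i : Fin n, X i.succ 0 = X i.succ i.succ := by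
    intro i
    have h := hpsd.1.apply 0 i.succ
    have h2 : X i.succ 0 = X 0 i.succ := by simpa using h
    rw [h2, hXd i]
  -- sum the pointwise values
  have hsum : ∑ i, ∑ j, W i j * X i j = t - ∑ i : Fin n, X i.succ i.succ := by
    rw [Finset.sum_congr rfl fun i _ => Finset.sum_congr rfl fun j _ => hpoint i j]
    rw [Fin.sum_univ_succ (f := fun i : Fin (n+1) => ∑ j : Fin (n+1),
      (if i.val = 0 then (if j.val = 0 then t else -X i j)
       else if j.val = 0 then -X i j else if i = j then X i j else 0))]
    have hrow0 : ∑ j : Fin (n+1),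
        (if (0 : Fin (n+1)).val = 0 then (if j.val = 0 then t else -X 0 j)
         else if j.val = 0 then -X 0 j else if (0 : Fin (n+1)) = j then X 0 j else 0)
        = t - ∑ j : Fin n, X j.succ j.succ := by
      rw [Fin.sum_univ_succ]
      simp only [Fin.val_zero, Fin.val_succ, Nat.succ_ne_zero, if_false,
        eq_self_iff_true, if_true]
      have h1 : ∑ j : Fin n, -X 0 j.succ = -(∑ j : Fin n, X j.succ j.succ) := by
        rw [Finset.sum_congr rfl fun (j : Fin n) _ => congrArg Neg.neg (hXd j),
          Finset.sum_neg_distrib]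
      rw [h1]
      ring
    have hrows : ∀ i : Fin n, ∑ j : Fin (n+1),
        (if (i.succ).val = 0 then (if j.val = 0 then t else -X i.succ j)
         else if j.val = 0 then -X i.succ j else if i.succ = j then X i.succ j else 0)
        = 0 := by
      intro i
      simp only [Fin.val_succ, Nat.succ_ne_zero, if_false]
      rw [Fin.sum_univ_succ]
      simp only [Fin.val_zero, Fin.val_succ, Nat.succ_ne_zero, if_false,
        eq_self_iff_true, if_true, Fin.succ_inj]
      rw [Finset.sum_ite_eq Finset.univ i (fun j : Fin n => X i.succ j.succ)]
      rw [if_pos (Finset.mem_univ i), hXh i]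
      ring
    rw [hrow0, Finset.sum_congr rfl fun i _ => hrows i]
    simp
  linarith [hcomb, hsum]

/-- For every odd `n ≥ 5`, the optimal value of the Lovász theta SDP of the complement `C̄_n`
of the `n`-cycle equals `(1 + cos(π/n)) / cos(π/n)`: it is the greatest element of the set of
objective values `∑_{i=1}^n X_{ii}` over all primal feasible `X`. -/
theorem lovaszTheta_antiCycle (n : ℕ) (hodd : Odd n) (hn : 5 ≤ n) :
    IsGreatest
      {t : ℝ | ∃ X : Matrix (Fin (n + 1)) (Fin (n + 1)) ℝ,
        thetaPrimalFeasible n (antiCycleAdj n) X ∧ t = ∑ i : Fin n, X i.succ i.succ}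
      ((1 + Real.cos (Real.pi / n)) / Real.cos (Real.pi / n)) := by
  have hval : (1 + Real.cos (Real.pi / n)) / Real.cos (Real.pi / n) = (1 + ltc n) / ltc n := rfl
  rw [hval]
  constructor
  · exact ⟨ltX n, ⟨ltX_posSemidef n, ltX_00 n hn,
      fun i hi => (ltX_diag n hodd hn i hi).trans (ltX_0j n hn i hi).symm,
      fun i j hi hj hadj => ltX_adj_zero n hodd hn i j hi hj hadj⟩,
      (ltX_objective n hodd hn).symm⟩
  · rintro t' ⟨X, ⟨hpsd, h00, hdiag, hzero⟩, rfl⟩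
    exact theta_upper n hodd hn X hpsd h00 hdiag hzero
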